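/- Let N be a single-qubit linear map of the form N(ρ) = U N'(V ρ V†) U†, where U,V are 2×2 unitary matrices and N' is the single-qubit normal-form map with parameters (D,t). Then for every nonempty subset A ⊆ {1,…,n} and every Hermitian 2^n×2^n matrix O_A = Σ_{P∈P_n, supp(P)=A} a_P P (a real linear combination of Pauli strings with support exactly A): ‖N^{†⊗n}(O_A)‖_F² ≤ Υ(D,t)^{|A|} · ‖O_A‖_F². -/

import Mathlib

open scoped Kronecker
open Matrix
open scoped ComplexOrder

noncomputable section

abbrev QMat := Matrix (Fin 2) (Fin 2) ℂ

abbrev NMat (n : ℕ) := Matrix (Fin n → Fin 2) (Fin n → Fin 2) ℂ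

/-- The four single-qubit Pauli matrices `I, X, Y, Z`. -/
def pauli : Fin 4 → QMat :=
  ![1, !![0, 1; 1, 0], !![0, -Complex.I; Complex.I, 0], !![1, 0; 0, -1]]

/-- The non-identity Paulis `X, Y, Z`. -/
def pauliXYZ (i : Fin 3) : QMat := pauli i.succ

/-- The `n`-qubit Pauli string indexed by `s : Fin n → Fin 4`. -/
def pauliString {n : ℕ} (s : Fin n → Fin 4) : NMat n :=
  Matrix.of fun i j => ∏ k, pauli (s k) (i k) (j k)

/-- Support of a Pauli string. -/
def psupp {n : ℕ} (s : Fin n → Fin 4) : Finset (Fin n) :=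
  Finset.univ.filter fun k => s k ≠ 0

/-- The observable with real Pauli coefficients `a`. -/
def obsOf {n : ℕ} (a : (Fin n → Fin 4) → ℝ) : NMat n :=
  ∑ s : Fin n → Fin 4, (a s : ℂ) • pauliString s

/-- Normalized Frobenius norm squared, `‖M‖_F² = Tr[Mᴴ M]/dim`. -/
def frobSq {m : Type*} [Fintype m] (M : Matrix m m ℂ) : ℝ :=
  (Matrix.trace (Mᴴ * M)).re / (Fintype.card m : ℝ)

def IsUnitary {m : Type*} [Fintype m] [DecidableEq m] (U : Matrix m m ℂ) : Prop :=
  U * Uᴴ = 1 ∧ Uᴴ * U = 1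

/-- Hilbert–Schmidt adjoint of a (linear) map on matrices:
`Φ†(A) i j = conj (Tr[Aᴴ Φ(E_{ij})])`. -/
def hsAdj {m : Type*} [Fintype m] [DecidableEq m]
    (Φ : Matrix m m ℂ → Matrix m m ℂ) (A : Matrix m m ℂ) : Matrix m m ℂ :=
  Matrix.of fun i j => (starRingEnd ℂ) (Matrix.trace (Aᴴ * Φ (Matrix.single i j 1)))

/-- Pauli transfer matrix entry of a single-qubit map. -/
def ptm (Φ : QMat → QMat) (a b : Fin 4) : ℂ :=
  Matrix.trace (pauli a * Φ (pauli b)) / 2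

/-- Tensor product `Φ 0 ⊗ Φ 1 ⊗ ⋯ ⊗ Φ (n-1)` of single-qubit (linear) maps,
defined via the Pauli transfer matrices. -/
def tensorMap {n : ℕ} (Φ : Fin n → QMat → QMat) (M : NMat n) : NMat n :=
  ∑ s : Fin n → Fin 4, ∑ t : Fin n → Fin 4,
    ((∏ k, ptm (Φ k) (s k) (t k)) * (Matrix.trace (pauliString t * M) / ((2 : ℂ) ^ n))) •
      pauliString s

/-- `n`-fold tensor power `Φ^{⊗n}` of a single-qubit (linear) map. -/
def tensorPow (n : ℕ) (Φ : QMat → QMat) : NMat n → NMat n :=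
  tensorMap fun _ => Φ

/-- Tensor product of `n` single-qubit matrices. -/
def qprod {n : ℕ} (V : Fin n → QMat) : NMat n :=
  Matrix.of fun i j => ∏ k, V k (i k) (j k)

/-- The single-qubit normal-form map `N'` with parameters `(D, t)`:
`N'(I) = I + Σ t_i σ_i` and `N'(σ_i) = D_i σ_i`. -/
def normalForm (D t : Fin 3 → ℝ) (M : QMat) : QMat :=
  (Matrix.trace M / 2) • (1 + ∑ i, (t i : ℂ) • pauliXYZ i) +
    ∑ i, ((D i : ℂ) * (Matrix.trace (pauliXYZ i * M) / 2)) • pauliXYZ i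

/-- `Υ(D,t) = max_{‖a‖₂=1} Σ_i a_i² D_i² + (Σ_i a_i t_i)²`. -/
def Upsilon (D t : Fin 3 → ℝ) : ℝ :=
  sSup { r : ℝ | ∃ a : Fin 3 → ℝ, (∑ i, a i ^ 2) = 1 ∧
    r = (∑ i, a i ^ 2 * D i ^ 2) + (∑ i, a i * t i) ^ 2 }

/-- Choi matrix of a single-qubit map. -/
def choi (Φ : QMat → QMat) : Matrix (Fin 2 × Fin 2) (Fin 2 × Fin 2) ℂ :=
  Matrix.of fun p q => Φ (Matrix.single p.1 q.1 1) p.2 q.2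

/-- A single-qubit quantum channel: linear, trace preserving, completely positive. -/
structure IsChannel (Φ : QMat → QMat) : Prop where
  linear : IsLinearMap ℂ Φ
  tracePreserving : ∀ M, Matrix.trace (Φ M) = Matrix.trace M
  completelyPositive : (choi Φ).PosSemidef

/-- Unitary 1-design (finitely supported distribution). -/
def IsOneDesign {ι : Type*} [Fintype ι] (w : ι → ℝ) (W : ι → QMat) : Prop :=
  ∀ M : QMat, ∑ i, (w i : ℂ) • (W i * M * (W i)ᴴ) = (Matrix.trace M / 2) • (1 : QMat)

/-- The swap (flip) operator on two qubits. -/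
def swapOp : Matrix (Fin 2 × Fin 2) (Fin 2 × Fin 2) ℂ :=
  Matrix.of fun p q => if p.1 = q.2 ∧ p.2 = q.1 then 1 else 0

/-- Unitary 2-design: the twirl of any `M` matches the Haar value
`c_I • 1 + c_F • F` (closed form of the Haar average on `U(2)`). -/
def IsTwoDesign {ι : Type*} [Fintype ι] (w : ι → ℝ) (W : ι → QMat) : Prop :=
  ∀ M : Matrix (Fin 2 × Fin 2) (Fin 2 × Fin 2) ℂ,
    ∑ i, (w i : ℂ) • ((W i ⊗ₖ W i) * M * (W i ⊗ₖ W i)ᴴ) =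
      ((Matrix.trace M - Matrix.trace (swapOp * M) / 2) / 3) •
          (1 : Matrix (Fin 2 × Fin 2) (Fin 2 × Fin 2) ℂ) +
        ((Matrix.trace (swapOp * M) - Matrix.trace M / 2) / 3) • swapOp

/-- `η`-approximate scrambler (finitely supported distribution over `U(2)`). -/
def IsApproxScrambler {ι : Type*} [Fintype ι] (η : ℝ) (w : ι → ℝ) (U : ι → QMat) : Prop :=
  (∀ a b : Fin 4, a ≠ b →
      ∑ i, (w i : ℂ) • (((U i)ᴴ * pauli a * U i) ⊗ₖ ((U i)ᴴ * pauli b * U i)) = 0) ∧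
    ∀ a b : Fin 3,
      ∑ i, w i * ((Matrix.trace (pauliXYZ a * U i * pauliXYZ b * (U i)ᴴ)).re / 2) ^ 2 ≤
        (1 + 2 * η) / 3

/-- Locally unbiased distribution over linear maps on `n`-qubit matrices. -/
def LocallyUnbiased (n : ℕ) {ι : Type*} [Fintype ι] (w : ι → ℝ)
    (C : ι → NMat n → NMat n) : Prop :=
  ∃ (m : ℕ) (v : Fin n → Fin m → ℝ) (W : Fin n → Fin m → QMat),
    (∀ j k, 0 ≤ v j k) ∧ (∀ j, ∑ k, v j k = 1) ∧ (∀ j k, IsUnitary (W j k)) ∧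
      (∀ j, IsOneDesign (v j) (W j)) ∧
      ∀ A B : NMat n,
        ∑ i, (w i : ℂ) • (C i A ⊗ₖ C i B) =
          ∑ i, ∑ f : Fin n → Fin m,
            ((w i * ∏ j, v j (f j) : ℝ) : ℂ) •
              (C i (qprod (fun j => W j (f j)) * A * (qprod fun j => W j (f j))ᴴ) ⊗ₖ
                C i (qprod (fun j => W j (f j)) * B * (qprod fun j => W j (f j))ᴴ))

/-- Pauli-invariant distribution over linear maps on `n`-qubit matrices. -/
def PauliInvariant (n : ℕ) {ι : Type*} [Fintype ι] (w : ι → ℝ)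
    (C : ι → NMat n → NMat n) : Prop :=
  ∀ A B : NMat n,
    ∑ i, (w i : ℂ) • (C i A ⊗ₖ C i B) =
      ((4 : ℂ) ^ n)⁻¹ • ∑ r : Fin n → Fin 4, ∑ i, (w i : ℂ) •
        (C i (pauliString r * A * pauliString r) ⊗ₖ C i (pauliString r * B * pauliString r))

/-- Fourier coefficient `Φ_γ(C) = Π_j 2^{-n} Tr[P_j C_j(P_{j-1})]` of a Pauli path. -/
def pathCoeff {n L : ℕ} (Cs : Fin L → NMat n → NMat n)
    (γ : Fin (L + 1) → Fin n → Fin 4) : ℂ :=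
  ∏ j : Fin L,
    (Matrix.trace (pauliString (γ j.succ) * Cs j (pauliString (γ j.castSucc))) / ((2 : ℂ) ^ n))

/-- Path weight `|γ| = Σ_{j=1}^L |P_j|`. -/
def pathWeight {n L : ℕ} (γ : Fin (L + 1) → Fin n → Fin 4) : ℕ :=
  ∑ j : Fin L, (psupp (γ j.succ)).card

/-- The (non-physical) map `Ñ_p` with `Ñ_p(I) = (N(I) - pI)/(1-p)` and
`Ñ_p(σ) = N(σ)/(1-p)` for `σ ∈ {X,Y,Z}`. -/
def tildeMap (N : QMat → QMat) (p : ℝ) (M : QMat) : QMat :=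
  (Matrix.trace M / 2) • (((1 : ℂ) - (p : ℂ))⁻¹ • (N 1 - (p : ℂ) • (1 : QMat))) +
    ∑ i : Fin 3, (Matrix.trace (pauliXYZ i * M) / 2) • (((1 : ℂ) - (p : ℂ))⁻¹ • N (pauliXYZ i))

/-- The layers of an `L`-layered noisy circuit: `C_j(ρ) = N^{⊗n}(U_j ρ U_j†)` for `j < L`,
and the last layer is followed by the single-qubit layer `V`. -/
def layerMaps {n L : ℕ} (Nm : QMat → QMat) (U : Fin L → NMat n) (Vt : NMat n)
    (j : Fin L) (ρ : NMat n) : NMat n :=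
  if j.val = L - 1 then Vt * tensorPow n Nm (U j * ρ * (U j)ᴴ) * Vtᴴ
  else tensorPow n Nm (U j * ρ * (U j)ᴴ)

/-- Composition `C_L ∘ ⋯ ∘ C_1` of the layers. -/
def circuitOf {n L : ℕ} (lm : Fin L → NMat n → NMat n) (ρ : NMat n) : NMat n :=
  (List.finRange L).foldl (fun σ j => lm j σ) ρ

/-- Operator (spectral) norm of a matrix, as the `ℓ²→ℓ²` operator norm. -/
def specNorm {m : Type*} [Fintype m] (M : Matrix m m ℂ) : ℝ :=
  Real.sqrt (sSup { r : ℝ | ∃ v : m → ℂ,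
    (∑ x, Complex.normSq (v x)) = 1 ∧ r = ∑ x, Complex.normSq (M.mulVec v x) })

/-- The old Mathlib `Matrix.PosSemidef.sqrt`, spelled out. -/
def psdSqrt {m : Type*} [Fintype m] [DecidableEq m] {A : Matrix m m ℂ} (hA : A.PosSemidef) :
    Matrix m m ℂ :=
  (hA.1.eigenvectorUnitary : Matrix m m ℂ) * Matrix.diagonal ((↑) ∘ Real.sqrt ∘ hA.1.eigenvalues) *
    (star hA.1.eigenvectorUnitary : Matrix m m ℂ)

/-- Trace norm `‖M‖₁ = Tr √(Mᴴ M)` (sum of singular values). -/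
def traceNorm {m : Type*} [Fintype m] [DecidableEq m] (M : Matrix m m ℂ) : ℝ :=
  (Matrix.trace (psdSqrt (Matrix.posSemidef_conjTranspose_mul_self M))).re


/-! ### Auxiliary lemmas -/

lemma pauli_herm (a : Fin 4) : (pauli a)ᴴ = pauli a := by
  fin_cases a <;> simp [pauli] <;>
    ext i j <;> fin_cases i <;> fin_cases j <;>
      simp [conjTranspose_apply, Complex.ext_iff]

lemma trace_pauli_mul (a b : Fin 4) :
    Matrix.trace (pauli a * pauli b) = if a = b then 2 else 0 := by
  fin_cases a <;> fin_cases b <;>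
    simp [pauli, Matrix.trace, Matrix.mul_apply, Fin.sum_univ_two, Complex.ext_iff] <;> norm_num

lemma pauli_parseval (X : QMat) :
    ∑ a : Fin 4, Complex.normSq (Matrix.trace (pauli a * X)) = 2 * (Matrix.trace (Xᴴ * X)).re := by
  simp [pauli, Matrix.trace, Matrix.mul_apply, Fin.sum_univ_two, Fin.sum_univ_four,
    Complex.normSq_apply, conjTranspose_apply, Complex.add_re, Complex.mul_re, Complex.mul_im]
  ring

lemma herm_trace_real {X : QMat} (h : Xᴴ = X) : (Matrix.trace X).im = 0 := by
  have := Matrix.trace_conjTranspose X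
  rw [h] at this
  have h2 : (starRingEnd ℂ) (Matrix.trace X) = Matrix.trace X := by
    simpa using this.symm
  have := congrArg Complex.im h2
  simp [Complex.conj_im] at this
  linarith

lemma trace_conj_inv {W X : QMat} (hW : IsUnitary W) :
    Matrix.trace ((Wᴴ * X * W)ᴴ * (Wᴴ * X * W)) = Matrix.trace (Xᴴ * X) := by
  have h1 : (Wᴴ * X * W)ᴴ = Wᴴ * Xᴴ * W := by
    simp [Matrix.conjTranspose_mul, Matrix.mul_assoc]
  rw [h1]
  have key : Wᴴ * Xᴴ * W * (Wᴴ * X * W) = Wᴴ * (Xᴴ * X) * W := by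
    have := hW.1
    calc Wᴴ * Xᴴ * W * (Wᴴ * X * W) = Wᴴ * Xᴴ * (W * Wᴴ) * (X * W) := by
          simp only [Matrix.mul_assoc]
      _ = Wᴴ * (Xᴴ * X) * W := by rw [hW.1]; simp only [Matrix.mul_assoc, Matrix.one_mul]
  rw [key, Matrix.trace_mul_comm]
  have : W * (Wᴴ * (Xᴴ * X)) = (W * Wᴴ) * (Xᴴ * X) := by simp only [Matrix.mul_assoc]
  rw [this, hW.1, Matrix.one_mul]

lemma hsAdj_sandwich {Φ : QMat → QMat}
    (hlin : ∀ (c : ℂ) (A B : QMat), Φ (c • A + B) = c • Φ A + Φ B)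
    (U V : QMat) (A : QMat) :
    hsAdj (fun ρ => U * Φ (V * ρ * Vᴴ) * Uᴴ) A
      = Vᴴ * hsAdj Φ (Uᴴ * A * U) * V := by
  have hzero : Φ 0 = 0 := by
    have := hlin 1 0 0
    simp at this
    linear_combination (norm := module) this
  have hΦsum : ∀ (ι : Type) (s : Finset ι) (c : ι → ℂ) (M : ι → QMat),
      Φ (∑ x ∈ s, c x • M x) = ∑ x ∈ s, c x • Φ (M x) := by
    intro ι s c M
    classical
    induction s using Finset.induction with
    | empty => simpa using hzero
    | insert _ _ hx ih =>
      rw [Finset.sum_insert hx, Finset.sum_insert hx, hlin, ih]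
  ext i j
  have hVE : V * Matrix.single i j 1 * Vᴴ
      = ∑ p : Fin 2 × Fin 2, (V p.1 i * (starRingEnd ℂ) (V p.2 j)) •
          Matrix.single p.1 p.2 1 := by
    fin_cases i <;> fin_cases j <;> ext k l <;> fin_cases k <;> fin_cases l <;>
      simp [Matrix.mul_apply, Matrix.single, Matrix.conjTranspose_apply,
        Fintype.sum_prod_type, Fin.sum_univ_two, Matrix.sum_apply]
  have hcyc : ∀ M : QMat, Matrix.trace (Aᴴ * (U * M * Uᴴ))
      = Matrix.trace ((Uᴴ * A * U)ᴴ * M) := by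
    intro M
    have h1 : (Uᴴ * A * U)ᴴ = Uᴴ * Aᴴ * U := by
      simp [Matrix.conjTranspose_mul, Matrix.mul_assoc]
    rw [h1]
    rw [Matrix.trace_mul_comm (Uᴴ * Aᴴ * U) M]
    rw [Matrix.trace_mul_comm (Aᴴ) (U * M * Uᴴ)]
    simp only [Matrix.mul_assoc]
    rw [Matrix.trace_mul_comm U (M * (Uᴴ * Aᴴ))]
    simp only [Matrix.mul_assoc]
  simp only [hsAdj, Matrix.of_apply, hcyc]
  rw [hVE, hΦsum (Fin 2 × Fin 2) Finset.univ]
  rw [Matrix.mul_sum, Matrix.trace_sum, map_sum]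
  simp only [Matrix.mul_smul, Matrix.trace_smul, smul_eq_mul]
  rw [Matrix.mul_apply]
  simp only [Matrix.mul_apply, Matrix.of_apply, Matrix.conjTranspose_apply, Finset.sum_mul]
  rw [Fintype.sum_prod_type, Finset.sum_comm]
  refine Finset.sum_congr rfl fun l _ => Finset.sum_congr rfl fun k _ => by
    simp only [_root_.map_mul, Complex.conj_conj, RCLike.star_def]; ring

/-- Explicit form of the Hilbert–Schmidt adjoint of the normal-form map. -/
def nfA (D t : Fin 3 → ℝ) (M : QMat) : QMat :=
  ((Matrix.trace M + ∑ i, (t i : ℂ) * Matrix.trace (pauliXYZ i * M)) / 2) • 1 +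
    ∑ i, ((D i : ℂ) * (Matrix.trace (pauliXYZ i * M) / 2)) • pauliXYZ i

lemma normalForm_lin (D t : Fin 3 → ℝ) (c : ℂ) (A B : QMat) :
    normalForm D t (c • A + B) = c • normalForm D t A + normalForm D t B := by
  simp only [normalForm, Matrix.mul_add, Matrix.mul_smul, Matrix.trace_add, Matrix.trace_smul,
    smul_eq_mul, Fin.sum_univ_three]
  module

lemma pauliXYZ_0 : pauliXYZ 0 = !![0, 1; 1, 0] := rfl
lemma pauliXYZ_1 : pauliXYZ 1 = !![0, -Complex.I; Complex.I, 0] := rfl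
lemma pauliXYZ_2 : pauliXYZ 2 = !![1, 0; 0, -1] := rfl

set_option maxHeartbeats 1000000 in
lemma hsAdj_normalForm (D t : Fin 3 → ℝ) (A : QMat) :
    hsAdj (normalForm D t) A = nfA D t A := by
  rw [← Matrix.ext_iff]
  simp only [Fin.forall_fin_two]
  refine ⟨⟨?_, ?_⟩, ?_, ?_⟩ <;>
  simp only [hsAdj, nfA, normalForm, pauliXYZ_0, pauliXYZ_1, pauliXYZ_2, Matrix.trace,
      Matrix.mul_apply,
      Fin.sum_univ_two, Fin.sum_univ_three, Matrix.conjTranspose_apply, Matrix.add_apply,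
      Matrix.smul_apply, Matrix.sum_apply, Matrix.one_apply, Matrix.diag_apply, Matrix.of_apply,
      smul_eq_mul, Matrix.single, Matrix.cons_val', Matrix.cons_val_zero,
      Matrix.cons_val_one, Matrix.head_cons, Matrix.head_fin_const, Matrix.empty_val',
      Matrix.cons_val_fin_one] <;>
  simp only [show ((1:Fin 2) = 0) ↔ False from by simp [Fin.ext_iff],
    show ((0:Fin 2) = 1) ↔ False from by simp [Fin.ext_iff], true_and, and_true, and_false,
    false_and, if_true, if_false, iff_false] <;>
  norm_num
  all_goals
    simp only [Complex.ext_iff, Complex.add_re, Complex.add_im, Complex.mul_re, Complex.mul_im,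
      Complex.conj_re, Complex.conj_im, Complex.I_re, Complex.I_im, Complex.ofReal_re,
      Complex.ofReal_im, Complex.div_re, Complex.div_im, Complex.normSq, Complex.one_re,
      Complex.one_im, Complex.zero_re, Complex.zero_im, Complex.neg_re, Complex.neg_im,
      MonoidWithZeroHom.coe_mk, ZeroHom.coe_mk, Complex.re_ofNat, Complex.im_ofNat, map_ofNat,
      Complex.inv_re, Complex.inv_im]
  all_goals constructor <;> norm_num <;> ring


lemma trace_pauli_comb (z : Fin 4 → ℂ) (a : Fin 4) :
    Matrix.trace (pauli a * ∑ b, z b • pauli b) = 2 * z a := by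
  rw [Matrix.mul_sum]
  simp only [Matrix.mul_smul, Matrix.trace_sum, Matrix.trace_smul, trace_pauli_mul,
    smul_eq_mul]
  rw [Finset.sum_congr rfl (fun b _ => by
    rw [show z b * (if a = b then (2:ℂ) else 0) = if a = b then 2 * z b else 0 by
      split <;> ring])]
  simp

lemma frob_comb (z : Fin 4 → ℂ) :
    (Matrix.trace ((∑ b, z b • pauli b)ᴴ * (∑ b, z b • pauli b))).re
      = 2 * ∑ b, Complex.normSq (z b) := by
  have h := pauli_parseval (∑ b, z b • pauli b)
  simp only [trace_pauli_comb] at h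
  have h2 : ∀ b, Complex.normSq (2 * z b) = 4 * Complex.normSq (z b) := by
    intro b; rw [Complex.normSq_mul]; norm_num
  rw [Finset.sum_congr rfl (fun b _ => h2 b), ← Finset.mul_sum] at h
  linarith

lemma nfA_sum (D t : Fin 3 → ℝ) (c : Fin 3 → ℂ) (M : Fin 3 → QMat) :
    nfA D t (∑ i, c i • M i) = ∑ i, c i • nfA D t (M i) := by
  simp only [nfA, Matrix.mul_sum, Matrix.mul_smul, Matrix.trace_sum, Matrix.trace_smul,
    Matrix.mul_add, Matrix.trace_add, smul_eq_mul, Fin.sum_univ_three]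
  module

lemma trace_pauliXYZ (i : Fin 3) : Matrix.trace (pauliXYZ i) = 0 := by
  fin_cases i <;> simp [pauliXYZ_0, pauliXYZ_1, pauliXYZ_2, Matrix.trace, Fin.sum_univ_two]

lemma pauliXYZ_herm (i : Fin 3) : (pauliXYZ i)ᴴ = pauliXYZ i := pauli_herm i.succ

lemma trace_mul_herm_real {A X : QMat} (hA : Aᴴ = A) (hX : Xᴴ = X) :
    (Matrix.trace (A * X)).im = 0 := by
  have h : (A * X)ᴴ = X * A := by rw [Matrix.conjTranspose_mul, hA, hX]
  have := Matrix.trace_conjTranspose (A * X)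
  rw [h, Matrix.trace_mul_comm] at this
  have h2 := congrArg Complex.im this
  simp [Complex.conj_im] at h2
  linarith

lemma upsilon_bddAbove (D t : Fin 3 → ℝ) :
    BddAbove { r : ℝ | ∃ a : Fin 3 → ℝ, (∑ i, a i ^ 2) = 1 ∧
      r = (∑ i, a i ^ 2 * D i ^ 2) + (∑ i, a i * t i) ^ 2 } := by
  refine ⟨(∑ i, D i ^ 2) + ∑ i, t i ^ 2, ?_⟩
  rintro r ⟨a, ha, rfl⟩
  have h1 : (∑ i, a i ^ 2 * D i ^ 2) ≤ ∑ i, D i ^ 2 := by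
    refine Finset.sum_le_sum fun i _ => ?_
    have hai : a i ^ 2 ≤ 1 := by
      have := Finset.single_le_sum (f := fun j => a j ^ 2)
        (fun j _ => sq_nonneg (a j)) (Finset.mem_univ i)
      linarith [this, ha.le]
    exact mul_le_of_le_one_left (sq_nonneg (D i)) hai
  have h2 : (∑ i, a i * t i) ^ 2 ≤ ∑ i, t i ^ 2 := by
    have := Finset.sum_mul_sq_le_sq_mul_sq Finset.univ a t
    rw [ha, one_mul] at this
    exact this
  exact add_le_add h1 h2

lemma upsilon_ge (D t : Fin 3 → ℝ) (a : Fin 3 → ℝ) :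
    (∑ i, a i ^ 2 * D i ^ 2) + (∑ i, a i * t i) ^ 2 ≤ Upsilon D t * ∑ i, a i ^ 2 := by
  have hnn : (0:ℝ) ≤ ∑ i, a i ^ 2 := Finset.sum_nonneg fun i _ => sq_nonneg _
  rcases eq_or_lt_of_le hnn with h0 | h0
  · have hz : ∀ i, a i = 0 := by
      intro i
      have := (Finset.sum_eq_zero_iff_of_nonneg (fun j _ => sq_nonneg (a j))).mp h0.symm
        i (Finset.mem_univ i)
      exact pow_eq_zero_iff (n := 2) (by norm_num) |>.mp this
    simp [hz]
  · set s := Real.sqrt (∑ i, a i ^ 2) with hs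
    have hspos : 0 < s := Real.sqrt_pos.mpr h0
    have hs2 : s ^ 2 = ∑ i, a i ^ 2 := Real.sq_sqrt hnn
    set b : Fin 3 → ℝ := fun i => a i / s with hb
    have hab : ∀ i, a i = s * b i := fun i => by
      rw [hb]; field_simp
    have hbsum : (∑ i, b i ^ 2) = 1 := by
      have : (∑ i, b i ^ 2) = (∑ i, a i ^ 2) / s ^ 2 := by
        rw [Finset.sum_div]
        exact Finset.sum_congr rfl fun i _ => by rw [hb]; ring
      rw [this, ← hs2]
      field_simp
    have hmem : ((∑ i, b i ^ 2 * D i ^ 2) + (∑ i, b i * t i) ^ 2) ∈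
        { r : ℝ | ∃ a : Fin 3 → ℝ, (∑ i, a i ^ 2) = 1 ∧
          r = (∑ i, a i ^ 2 * D i ^ 2) + (∑ i, a i * t i) ^ 2 } := ⟨b, hbsum, rfl⟩
    have hle : (∑ i, b i ^ 2 * D i ^ 2) + (∑ i, b i * t i) ^ 2 ≤ Upsilon D t :=
      le_csSup (upsilon_bddAbove D t) hmem
    have e1 : (∑ i, a i ^ 2 * D i ^ 2) = s ^ 2 * ∑ i, b i ^ 2 * D i ^ 2 := by
      rw [Finset.mul_sum]
      exact Finset.sum_congr rfl fun i _ => by rw [hab i]; ring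
    have e2 : (∑ i, a i * t i) = s * ∑ i, b i * t i := by
      rw [Finset.mul_sum]
      exact Finset.sum_congr rfl fun i _ => by rw [hab i]; ring
    rw [e1, e2, ← hs2]
    have := mul_le_mul_of_nonneg_left hle (sq_nonneg s)
    calc s ^ 2 * (∑ i, b i ^ 2 * D i ^ 2) + (s * ∑ i, b i * t i) ^ 2
        = s ^ 2 * ((∑ i, b i ^ 2 * D i ^ 2) + (∑ i, b i * t i) ^ 2) := by ring
      _ ≤ s ^ 2 * Upsilon D t := this
      _ = Upsilon D t * s ^ 2 := by ring

lemma upsilon_nonneg (D t : Fin 3 → ℝ) : 0 ≤ Upsilon D t := by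
  have hmem : (D 0 ^ 2 + t 0 ^ 2) ∈
      { r : ℝ | ∃ a : Fin 3 → ℝ, (∑ i, a i ^ 2) = 1 ∧
        r = (∑ i, a i ^ 2 * D i ^ 2) + (∑ i, a i * t i) ^ 2 } := by
    refine ⟨![1, 0, 0], by simp [Fin.sum_univ_three], by simp [Fin.sum_univ_three]⟩
  have := le_csSup (upsilon_bddAbove D t) hmem
  have h0 : (0:ℝ) ≤ D 0 ^ 2 + t 0 ^ 2 := by positivity
  exact h0.trans this

lemma hsAdjN_eq {D t : Fin 3 → ℝ} {U V : QMat} {N : QMat → QMat}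
    (hNform : ∀ ρ, N ρ = U * normalForm D t (V * ρ * Vᴴ) * Uᴴ) (A : QMat) :
    hsAdj N A = Vᴴ * nfA D t (Uᴴ * A * U) * V := by
  have hfun : N = fun ρ => U * normalForm D t (V * ρ * Vᴴ) * Uᴴ := funext hNform
  rw [hfun, hsAdj_sandwich (normalForm_lin D t) U V A, hsAdj_normalForm]

lemma site_real_bound {D t : Fin 3 → ℝ} {U V : QMat} {N : QMat → QMat}
    (hU : IsUnitary U) (hV : IsUnitary V)
    (hNform : ∀ ρ, N ρ = U * normalForm D t (V * ρ * Vᴴ) * Uᴴ) (u : Fin 3 → ℝ) :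
    (∀ a : Fin 4, (∑ i, ptm (hsAdj N) a i.succ * (u i : ℂ)).im = 0) ∧
      ∑ a : Fin 4, Complex.normSq (∑ i, ptm (hsAdj N) a i.succ * (u i : ℂ))
        ≤ Upsilon D t * ∑ i, (u i) ^ 2 := by
  classical
  set σu : QMat := ∑ i, ((u i : ℂ)) • pauliXYZ i with hσu
  set τ : QMat := Uᴴ * σu * U with hτ
  set X : QMat := hsAdj N σu with hXs
  have hXdef : X = Vᴴ * nfA D t τ * V := hsAdjN_eq hNform σu
  -- linearity: the Pauli-transfer combination equals a single trace
  have hdist : X = ∑ i, (u i : ℂ) • hsAdj N (pauliXYZ i) := by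
    rw [hXdef]
    have h1 : τ = ∑ i, (u i : ℂ) • (Uᴴ * pauliXYZ i * U) := by
      rw [hτ, hσu, Matrix.mul_sum, Matrix.sum_mul]
      exact Finset.sum_congr rfl fun i _ => by
        rw [Matrix.mul_smul, Matrix.smul_mul]
    rw [h1, nfA_sum, Matrix.mul_sum, Matrix.sum_mul]
    exact Finset.sum_congr rfl fun i _ => by
      rw [Matrix.mul_smul, Matrix.smul_mul, hsAdjN_eq hNform]
  have hlin : ∀ a : Fin 4, (∑ i, ptm (hsAdj N) a i.succ * (u i : ℂ))
      = Matrix.trace (pauli a * X) / 2 := by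
    intro a
    rw [hdist, Matrix.mul_sum, Matrix.trace_sum, Finset.sum_div]
    exact Finset.sum_congr rfl fun i _ => by
      rw [Matrix.mul_smul, Matrix.trace_smul]
      show ptm (hsAdj N) a i.succ * (u i : ℂ) = _
      rw [ptm]
      show Matrix.trace (pauli a * hsAdj N (pauliXYZ i)) / 2 * (u i : ℂ) = _
      rw [smul_eq_mul]
      ring
  -- hermiticity facts
  have hσherm : σuᴴ = σu := by
    rw [hσu, Matrix.conjTranspose_sum]
    exact Finset.sum_congr rfl fun i _ => by
      rw [Matrix.conjTranspose_smul, pauliXYZ_herm, Complex.star_def, Complex.conj_ofReal]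
  have hτherm : τᴴ = τ := by
    rw [hτ]
    simp [Matrix.conjTranspose_mul, Matrix.mul_assoc, hσherm]
  have hσtr : Matrix.trace σu = 0 := by
    rw [hσu, Matrix.trace_sum]
    simp [Matrix.trace_smul, trace_pauliXYZ]
  have hτtr : Matrix.trace τ = 0 := by
    rw [hτ, Matrix.trace_mul_comm (Uᴴ * σu) U, ← Matrix.mul_assoc, hU.1, Matrix.one_mul, hσtr]
  set c : Fin 3 → ℂ := fun i => Matrix.trace (pauliXYZ i * τ) / 2 with hc
  have hcim : ∀ i, (c i).im = 0 := by
    intro i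
    have h0 := trace_mul_herm_real (pauliXYZ_herm i) hτherm
    rw [hc]
    simp [Complex.div_im, h0]
  set α : Fin 3 → ℝ := fun i => (c i).re with hα
  have hcα : ∀ i, c i = ((α i : ℝ) : ℂ) := fun i => Complex.ext rfl (by simp [hα, hcim i])
  -- combination form of nfA τ
  set z : Fin 4 → ℂ := fun b =>
    Fin.cases (∑ i, (t i : ℂ) * c i) (fun i => (D i : ℂ) * c i) b with hzd
  have hz : nfA D t τ = ∑ b, z b • pauli b := by
    rw [Fin.sum_univ_succ]
    simp only [hzd, Fin.cases_zero, Fin.cases_succ]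
    rw [nfA, hτtr]
    have hcoef : ((0:ℂ) + ∑ i, (t i : ℂ) * Matrix.trace (pauliXYZ i * τ)) / 2
        = ∑ i, (t i : ℂ) * ((Matrix.trace (pauliXYZ i * τ)) / 2) := by
      rw [zero_add, Finset.sum_div]
      exact Finset.sum_congr rfl fun i _ => by ring
    rw [hcoef]
    rfl
  have hzim : ∀ b, (z b).im = 0 := by
    have h0 : (z 0).im = 0 := by
      simp only [hzd, Fin.cases_zero, Complex.im_sum]
      refine Finset.sum_eq_zero fun i _ => ?_
      rw [hcα i]
      simp [← Complex.ofReal_mul]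
    have hsucc : ∀ i : Fin 3, (z i.succ).im = 0 := by
      intro i
      simp only [hzd, Fin.cases_succ]
      rw [hcα i]
      simp [← Complex.ofReal_mul]
    intro b
    exact Fin.cases h0 hsucc b
  have hzreal : ∀ b, ((z b).re : ℂ) = z b := fun b => Complex.ext rfl (by simp [hzim b])
  -- hermiticity of X
  have hYherm : (nfA D t τ)ᴴ = nfA D t τ := by
    rw [hz, Matrix.conjTranspose_sum]
    exact Finset.sum_congr rfl fun b _ => by
      rw [Matrix.conjTranspose_smul, pauli_herm, Complex.star_def, ← hzreal b,
        Complex.conj_ofReal]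
  have hXherm : Xᴴ = X := by
    rw [hXdef]
    simp [Matrix.conjTranspose_mul, Matrix.mul_assoc, hYherm]
  have him : ∀ a : Fin 4, (∑ i, ptm (hsAdj N) a i.succ * (u i : ℂ)).im = 0 := by
    intro a
    rw [hlin a]
    have h0 := trace_mul_herm_real (pauli_herm a) hXherm
    simp [Complex.div_im, h0]
  refine ⟨him, ?_⟩
  -- value computation
  have hval : ∑ a : Fin 4, Complex.normSq (∑ i, ptm (hsAdj N) a i.succ * (u i : ℂ))
      = ∑ b, Complex.normSq (z b) := by
    have e1 : ∀ a : Fin 4, Complex.normSq (∑ i, ptm (hsAdj N) a i.succ * (u i : ℂ))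
        = Complex.normSq (Matrix.trace (pauli a * X)) / 4 := by
      intro a
      rw [hlin a, Complex.normSq_div]
      norm_num
    rw [Finset.sum_congr rfl fun a _ => e1 a, ← Finset.sum_div, pauli_parseval]
    have e2 : Matrix.trace (Xᴴ * X) = Matrix.trace ((nfA D t τ)ᴴ * nfA D t τ) := by
      rw [hXdef]
      exact trace_conj_inv hV
    rw [e2, hz, frob_comb]
    ring
  rw [hval]
  -- norm preservation: ∑ α² = ∑ u²
  have hτfrob : Matrix.trace (τᴴ * τ) = Matrix.trace (σuᴴ * σu) := by
    rw [hτ]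
    exact trace_conj_inv hU
  have hσcomb : σu = ∑ b, (fun b => Fin.cases (motive := fun _ => ℂ) 0 (fun i => ((u i : ℝ) : ℂ)) b) b • pauli b := by
    rw [Fin.sum_univ_succ]
    simp only [Fin.cases_zero, Fin.cases_succ, zero_smul, zero_add]
    rw [hσu]
    rfl
  have hσfrob : (Matrix.trace (σuᴴ * σu)).re = 2 * ∑ i, (u i) ^ 2 := by
    rw [hσcomb, frob_comb, Fin.sum_univ_succ]
    simp [Complex.normSq_ofReal, sq]
  have hαu : ∑ i, (α i) ^ 2 = ∑ i, (u i) ^ 2 := by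
    have hp := pauli_parseval τ
    rw [Fin.sum_univ_succ] at hp
    have e0 : Matrix.trace (pauli 0 * τ) = 0 := by
      have : pauli 0 = (1:QMat) := rfl
      rw [this, Matrix.one_mul, hτtr]
    have es : ∀ i : Fin 3, Matrix.trace (pauli i.succ * τ) = 2 * c i := by
      intro i
      rw [hc]
      show Matrix.trace (pauliXYZ i * τ) = _
      ring
    rw [e0] at hp
    simp only [Complex.normSq_zero, zero_add] at hp
    rw [Finset.sum_congr rfl fun i _ => by rw [es i]] at hp
    have e3 : ∀ i : Fin 3, Complex.normSq (2 * c i) = 4 * (α i) ^ 2 := by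
      intro i
      rw [Complex.normSq_mul, hcα i, Complex.normSq_ofReal]
      norm_num
      ring
    rw [Finset.sum_congr rfl fun i _ => e3 i, ← Finset.mul_sum, hτfrob, hσfrob] at hp
    linarith
  -- final evaluation and Upsilon bound
  have hzval : ∑ b, Complex.normSq (z b)
      = (∑ i, (α i) ^ 2 * D i ^ 2) + (∑ i, α i * t i) ^ 2 := by
    rw [Fin.sum_univ_succ]
    have e0 : Complex.normSq (z 0) = (∑ i, α i * t i) ^ 2 := by
      have : z 0 = ((∑ i, α i * t i : ℝ) : ℂ) := by
        simp only [hzd, Fin.cases_zero]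
        rw [Complex.ofReal_sum]
        exact Finset.sum_congr rfl fun i _ => by
          rw [hcα i]
          push_cast
          ring
      rw [this, Complex.normSq_ofReal, sq]
    have es : ∀ i : Fin 3, Complex.normSq (z i.succ) = (α i) ^ 2 * D i ^ 2 := by
      intro i
      have : z i.succ = (((D i * α i : ℝ)) : ℂ) := by
        simp only [hzd, Fin.cases_succ]
        rw [hcα i]
        push_cast
        ring
      rw [this, Complex.normSq_ofReal]
      ring
    rw [e0, Finset.sum_congr rfl fun i _ => es i]
    ring
  rw [hzval, ← hαu]
  exact upsilon_ge D t α

lemma site_bound {D t : Fin 3 → ℝ} {U V : QMat} {N : QMat → QMat}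
    (hU : IsUnitary U) (hV : IsUnitary V)
    (hNform : ∀ ρ, N ρ = U * normalForm D t (V * ρ * Vᴴ) * Uᴴ)
    (y : Fin 4 → ℂ) (hy : y 0 = 0) :
    ∑ a : Fin 4, Complex.normSq (∑ b, ptm (hsAdj N) a b * y b)
      ≤ Upsilon D t * ∑ b, Complex.normSq (y b) := by
  set u : Fin 3 → ℝ := fun i => (y i.succ).re with hu
  set v : Fin 3 → ℝ := fun i => (y i.succ).im with hv
  have hsplit : ∀ a, (∑ b, ptm (hsAdj N) a b * y b)
      = (∑ i, ptm (hsAdj N) a i.succ * (u i : ℂ))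
        + (∑ i, ptm (hsAdj N) a i.succ * (v i : ℂ)) * Complex.I := by
    intro a
    rw [Fin.sum_univ_succ, hy, mul_zero, zero_add, Finset.sum_mul, ← Finset.sum_add_distrib]
    refine Finset.sum_congr rfl fun i _ => ?_
    have hyi : y i.succ = (u i : ℂ) + (v i : ℂ) * Complex.I := (Complex.re_add_im _).symm
    rw [hyi]
    ring
  obtain ⟨hru, hbu⟩ := site_real_bound hU hV hNform u
  obtain ⟨hrv, hbv⟩ := site_real_bound hU hV hNform v
  have step1 : ∑ a : Fin 4, Complex.normSq (∑ b, ptm (hsAdj N) a b * y b)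
      = ∑ a : Fin 4, (Complex.normSq (∑ i, ptm (hsAdj N) a i.succ * (u i : ℂ))
        + Complex.normSq (∑ i, ptm (hsAdj N) a i.succ * (v i : ℂ))) := by
    refine Finset.sum_congr rfl fun a _ => ?_
    rw [hsplit a]
    simp only [Complex.normSq_apply, Complex.add_re, Complex.add_im, Complex.mul_re,
      Complex.mul_im, Complex.I_re, Complex.I_im, hru a, hrv a]
    ring
  rw [step1, Finset.sum_add_distrib]
  have step2 : Upsilon D t * (∑ i, (u i) ^ 2) + Upsilon D t * (∑ i, (v i) ^ 2)
      = Upsilon D t * ∑ b, Complex.normSq (y b) := by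
    rw [← mul_add]
    congr 1
    have hys : (∑ b : Fin 4, Complex.normSq (y b)) = ∑ i : Fin 3, Complex.normSq (y i.succ) := by
      rw [Fin.sum_univ_succ, hy, Complex.normSq_zero, zero_add]
    rw [hys, ← Finset.sum_add_distrib]
    exact Finset.sum_congr rfl fun i _ => by
      rw [Complex.normSq_apply]; simp [hu, hv, sq]
  rw [← step2]
  exact add_le_add hbu hbv

lemma ptm_id_col {D t : Fin 3 → ℝ} {U V : QMat} {N : QMat → QMat}
    (hU : IsUnitary U) (hV : IsUnitary V)
    (hNform : ∀ ρ, N ρ = U * normalForm D t (V * ρ * Vᴴ) * Uᴴ) (a : Fin 4) :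
    ptm (hsAdj N) a 0 = if a = 0 then 1 else 0 := by
  rw [ptm]
  have h1 : hsAdj N (pauli 0) = 1 := by
    rw [show pauli 0 = (1 : QMat) from rfl, hsAdjN_eq hNform, Matrix.mul_one, hU.2]
    have h2 : nfA D t 1 = 1 := by
      rw [nfA]
      have htr : ∀ i : Fin 3, Matrix.trace (pauliXYZ i * (1:QMat)) = 0 := fun i => by
        rw [Matrix.mul_one, trace_pauliXYZ]
      simp [htr, trace_pauliXYZ, Matrix.trace_one]
    rw [h2, Matrix.mul_one, hV.2]
  rw [h1, show (1 : QMat) = pauli 0 from rfl, trace_pauli_mul]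
  split <;> norm_num

lemma site_bound_id {D t : Fin 3 → ℝ} {U V : QMat} {N : QMat → QMat}
    (hU : IsUnitary U) (hV : IsUnitary V)
    (hNform : ∀ ρ, N ρ = U * normalForm D t (V * ρ * Vᴴ) * Uᴴ)
    (y : Fin 4 → ℂ) (hy : ∀ b : Fin 4, b ≠ 0 → y b = 0) :
    ∑ a : Fin 4, Complex.normSq (∑ b, ptm (hsAdj N) a b * y b)
      ≤ 1 * ∑ b, Complex.normSq (y b) := by
  have hterm : ∀ a : Fin 4, (∑ b, ptm (hsAdj N) a b * y b)
      = if a = 0 then y 0 else 0 := by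
    intro a
    rw [Finset.sum_eq_single 0 (fun b _ hb => by rw [hy b hb, mul_zero])
      (fun h => absurd (Finset.mem_univ 0) h)]
    rw [ptm_id_col hU hV hNform]
    split <;> simp
  have h2 : ∀ i : Fin 3, Complex.normSq (if (i.succ : Fin 4) = 0 then y 0 else 0) = 0 := by
    intro i
    rw [if_neg (Fin.succ_ne_zero i), Complex.normSq_zero]
  rw [Finset.sum_congr rfl fun a _ => by rw [hterm a]]
  rw [Fin.sum_univ_succ]
  simp only [if_pos rfl]
  rw [Finset.sum_congr rfl fun i _ => h2 i, Finset.sum_const_zero, add_zero, one_mul,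
    Fin.sum_univ_succ (f := fun b => Complex.normSq (y b))]
  exact le_add_of_nonneg_right (Finset.sum_nonneg fun i _ => Complex.normSq_nonneg _)

lemma tensor_bound {n : ℕ} (m : Fin 4 → Fin 4 → ℂ) (c : Fin n → ℝ) (hc : ∀ k, 0 ≤ c k)
    (S : Fin n → Fin 4 → Prop)
    (hsite : ∀ (k : Fin n) (y : Fin 4 → ℂ), (∀ b, ¬ S k b → y b = 0) →
      ∑ a : Fin 4, Complex.normSq (∑ b, m a b * y b) ≤ c k * ∑ b, Complex.normSq (y b))
    (x : (Fin n → Fin 4) → ℂ) (hx : ∀ s, x s ≠ 0 → ∀ k, S k (s k)) :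
    ∑ s : Fin n → Fin 4,
        Complex.normSq (∑ r : Fin n → Fin 4, (∏ k, m (s k) (r k)) * x r)
      ≤ (∏ k, c k) * ∑ r : Fin n → Fin 4, Complex.normSq (x r) := by
  classical
  induction n with
  | zero =>
    simp
  | succ n ih =>
    have hsum : ∀ {M : Type} [AddCommMonoid M] (g : (Fin (n+1) → Fin 4) → M),
        ∑ s : Fin (n+1) → Fin 4, g s
          = ∑ b : Fin 4, ∑ f : Fin n → Fin 4, g (Fin.cons b f) := by
      intro M _ g
      have h1 : ∑ p : Fin 4 × (Fin n → Fin 4), g (Fin.cons p.1 p.2)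
          = ∑ s : Fin (n+1) → Fin 4, g s :=
        Fintype.sum_equiv (Fin.consEquiv (fun _ => Fin 4))
          (fun p => g (Fin.cons p.1 p.2)) g (fun p => rfl)
      have h2 : ∑ p : Fin 4 × (Fin n → Fin 4), g (Fin.cons p.1 p.2)
          = ∑ b : Fin 4, ∑ f : Fin n → Fin 4, g (Fin.cons b f) :=
        Fintype.sum_prod_type (f := fun p => g (Fin.cons p.1 p.2))
      rw [← h1, h2]
    set F : Fin 4 → (Fin n → Fin 4) → ℂ := fun b s' =>
      ∑ r' : Fin n → Fin 4, (∏ k, m (s' k) (r' k)) * x (Fin.cons b r') with hF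
    have hinner : ∀ (s0 : Fin 4) (s' : Fin n → Fin 4),
        (∑ r : Fin (n+1) → Fin 4, (∏ k, m ((Fin.cons s0 s' : Fin (n+1) → Fin 4) k) (r k)) * x r)
          = ∑ b, m s0 b * F b s' := by
      intro s0 s'
      rw [hsum]
      refine Finset.sum_congr rfl fun b _ => ?_
      rw [hF, Finset.mul_sum]
      refine Finset.sum_congr rfl fun r' _ => ?_
      rw [Fin.prod_univ_succ]
      simp only [Fin.cons_zero, Fin.cons_succ]
      ring
    have e1 : ∑ s : Fin (n+1) → Fin 4,
          Complex.normSq (∑ r : Fin (n+1) → Fin 4, (∏ k, m (s k) (r k)) * x r)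
        = ∑ s' : Fin n → Fin 4, ∑ s0 : Fin 4, Complex.normSq (∑ b, m s0 b * F b s') := by
      rw [hsum (fun s => Complex.normSq (∑ r : Fin (n+1) → Fin 4,
        (∏ k, m (s k) (r k)) * x r))]
      rw [Finset.sum_comm]
      exact Finset.sum_congr rfl fun s' _ => Finset.sum_congr rfl fun s0 _ =>
        congrArg Complex.normSq (hinner s0 s')
    have step1 : ∀ s' : Fin n → Fin 4,
        ∑ s0 : Fin 4, Complex.normSq (∑ b, m s0 b * F b s')
          ≤ c 0 * ∑ b, Complex.normSq (F b s') := by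
      intro s'
      refine hsite 0 (fun b => F b s') fun b hb => ?_
      rw [hF]
      refine Finset.sum_eq_zero fun r' _ => ?_
      have hx0 : x (Fin.cons b r') = 0 := by
        by_contra h
        exact hb (by simpa [Fin.cons_zero] using hx _ h 0)
      rw [hx0, mul_zero]
    have step2 : ∀ b : Fin 4,
        ∑ s' : Fin n → Fin 4, Complex.normSq (F b s')
          ≤ (∏ k : Fin n, c k.succ) * ∑ r' : Fin n → Fin 4,
              Complex.normSq (x (Fin.cons b r')) := by
      intro b
      refine ih (fun k => c k.succ) (fun k => hc k.succ) (fun k => S k.succ)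
        (fun k => hsite k.succ) (fun r' => x (Fin.cons b r')) fun r' hr' k => ?_
      have := hx (Fin.cons b r') hr' k.succ
      simpa [Fin.cons_succ] using this
    rw [e1]
    calc ∑ s' : Fin n → Fin 4, ∑ s0 : Fin 4, Complex.normSq (∑ b, m s0 b * F b s')
        ≤ ∑ s' : Fin n → Fin 4, c 0 * ∑ b, Complex.normSq (F b s') :=
          Finset.sum_le_sum fun s' _ => step1 s'
      _ = c 0 * ∑ b : Fin 4, ∑ s' : Fin n → Fin 4, Complex.normSq (F b s') := by
          rw [← Finset.mul_sum, Finset.sum_comm]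
      _ ≤ c 0 * ∑ b : Fin 4, ((∏ k : Fin n, c k.succ) * ∑ r' : Fin n → Fin 4,
            Complex.normSq (x (Fin.cons b r'))) := by
          exact mul_le_mul_of_nonneg_left
            (Finset.sum_le_sum fun b _ => step2 b) (hc 0)
      _ = (∏ k : Fin (n+1), c k) * ∑ r : Fin (n+1) → Fin 4, Complex.normSq (x r) := by
          rw [hsum (fun r => Complex.normSq (x r)), Fin.prod_univ_succ, ← Finset.mul_sum]
          ring

lemma pauliString_herm {n : ℕ} (s : Fin n → Fin 4) : (pauliString s)ᴴ = pauliString s := by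
  ext i j
  rw [Matrix.conjTranspose_apply]
  show star (pauliString s j i) = pauliString s i j
  rw [pauliString, Matrix.of_apply, Matrix.of_apply, star_prod]
  refine Finset.prod_congr rfl fun k _ => ?_
  have h := congrFun (congrFun (pauli_herm (s k)) (i k)) (j k)
  rw [Matrix.conjTranspose_apply] at h
  exact h

lemma trace_pauliString_mul {n : ℕ} (s r : Fin n → Fin 4) :
    Matrix.trace (pauliString s * pauliString r) = if s = r then (2:ℂ)^n else 0 := by
  classical
  have h1 : Matrix.trace (pauliString s * pauliString r)
      = ∏ k, Matrix.trace (pauli (s k) * pauli (r k)) := by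
    have e1 : Matrix.trace (pauliString s * pauliString r)
        = ∑ i : Fin n → Fin 2, ∑ j : Fin n → Fin 2,
            ∏ k, (pauli (s k) (i k) (j k) * pauli (r k) (j k) (i k)) := by
      rw [Matrix.trace]
      refine Finset.sum_congr rfl fun i _ => ?_
      rw [Matrix.diag_apply, Matrix.mul_apply]
      refine Finset.sum_congr rfl fun j _ => ?_
      rw [pauliString, pauliString, Matrix.of_apply, Matrix.of_apply,
        ← Finset.prod_mul_distrib]
    have e2 : ∀ k : Fin n, Matrix.trace (pauli (s k) * pauli (r k))
        = ∑ x : Fin 2, ∑ y : Fin 2, pauli (s k) x y * pauli (r k) y x := by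
      intro k
      rw [Matrix.trace]
      refine Finset.sum_congr rfl fun x _ => ?_
      rw [Matrix.diag_apply, Matrix.mul_apply]
    rw [e1]
    rw [Finset.sum_congr rfl fun i _ => by
      rw [← Fintype.piFinset_univ, ← Finset.prod_univ_sum
        (t := fun _ : Fin n => (Finset.univ : Finset (Fin 2)))
        (f := fun k y => pauli (s k) (i k) y * pauli (r k) y (i k))]]
    rw [← Fintype.piFinset_univ, ← Finset.prod_univ_sum
      (t := fun _ : Fin n => (Finset.univ : Finset (Fin 2)))
      (f := fun k x => ∑ y : Fin 2, pauli (s k) x y * pauli (r k) y x)]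
    exact Finset.prod_congr rfl fun k _ => (e2 k).symm
  rw [h1]
  by_cases h : s = r
  · subst h
    simp only [trace_pauli_mul, if_pos rfl]
    rw [Finset.prod_const, Finset.card_univ, Fintype.card_fin]
    simp
  · obtain ⟨k, hk⟩ : ∃ k, s k ≠ r k := by
      by_contra hcon
      push_neg at hcon
      exact h (funext hcon)
    rw [if_neg h]
    refine Finset.prod_eq_zero (Finset.mem_univ k) ?_
    rw [trace_pauli_mul, if_neg hk]

lemma trace_pauliString_comb {n : ℕ} (z : (Fin n → Fin 4) → ℂ) (r : Fin n → Fin 4) :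
    Matrix.trace (pauliString r * ∑ s, z s • pauliString s) = 2^n * z r := by
  rw [Matrix.mul_sum, Matrix.trace_sum]
  simp only [Matrix.mul_smul, Matrix.trace_smul, smul_eq_mul, trace_pauliString_mul]
  rw [Finset.sum_congr rfl fun s _ => show z s * (if r = s then (2:ℂ)^n else 0)
    = if r = s then 2^n * z s else 0 from by split <;> ring]
  simp

lemma frobSq_comb {n : ℕ} (z : (Fin n → Fin 4) → ℂ) :
    frobSq (∑ s, z s • pauliString s) = ∑ s, Complex.normSq (z s) := by
  rw [frobSq]
  have hherm : (∑ s, z s • pauliString s)ᴴ = ∑ s, star (z s) • pauliString s := by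
    rw [Matrix.conjTranspose_sum]
    exact Finset.sum_congr rfl fun s _ => by
      rw [Matrix.conjTranspose_smul, pauliString_herm]
  rw [hherm, Finset.sum_mul, Matrix.trace_sum]
  simp only [Matrix.smul_mul, Matrix.trace_smul, smul_eq_mul, trace_pauliString_comb]
  have e1 : ∀ s : Fin n → Fin 4, star (z s) * (2^n * z s)
      = ((2^n * Complex.normSq (z s) : ℝ) : ℂ) := by
    intro s
    have : star (z s) * z s = ((Complex.normSq (z s) : ℝ) : ℂ) :=
      (Complex.normSq_eq_conj_mul_self (z := z s)).symm
    push_cast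
    rw [show star (z s) * ((2:ℂ)^n * z s) = 2^n * (star (z s) * z s) from by ring, this]
  rw [Finset.sum_congr rfl fun s _ => e1 s, ← Complex.ofReal_sum]
  rw [Complex.ofReal_re]
  have hcard : (Fintype.card (Fin n → Fin 2) : ℝ) = 2^n := by
    rw [Fintype.card_fun]
    simp
  rw [hcard, ← Finset.mul_sum]
  exact mul_div_cancel_left₀ _ (by positivity)

lemma tensorPow_comb {n : ℕ} (Φ : QMat → QMat) (a : (Fin n → Fin 4) → ℝ) :
    tensorPow n Φ (obsOf a)
      = ∑ s, (∑ r, (∏ k, ptm Φ (s k) (r k)) * (a r : ℂ)) • pauliString s := by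
  rw [tensorPow, tensorMap]
  have htr : ∀ r : Fin n → Fin 4,
      Matrix.trace (pauliString r * obsOf a) / ((2:ℂ)^n) = (a r : ℂ) := by
    intro r
    rw [obsOf, trace_pauliString_comb]
    exact mul_div_cancel_left₀ _ (pow_ne_zero _ two_ne_zero)
  refine Finset.sum_congr rfl fun s _ => ?_
  rw [← Finset.sum_smul]
  congr 1
  exact Finset.sum_congr rfl fun r _ => by rw [htr r]

/-- (General upper bound on contraction coefficients.)
For `N(ρ) = U N'(V ρ Vᴴ) Uᴴ` and any observable supported exactly on `A ≠ ∅`: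
`‖N^{†⊗n}(O_A)‖_F² ≤ Υ(D,t)^{|A|}·‖O_A‖_F²`. -/
theorem stmt_2 (n : ℕ) (D t : Fin 3 → ℝ) (U V : QMat)
    (hU : IsUnitary U) (hV : IsUnitary V)
    (N : QMat → QMat)
    (hNform : ∀ ρ, N ρ = U * normalForm D t (V * ρ * Vᴴ) * Uᴴ)
    (A : Finset (Fin n)) (hA : A.Nonempty)
    (a : (Fin n → Fin 4) → ℝ) (ha : ∀ s, psupp s ≠ A → a s = 0) :
    frobSq (tensorPow n (hsAdj N) (obsOf a)) ≤
      Upsilon D t ^ A.card * frobSq (obsOf a) := by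
  classical
  rw [tensorPow_comb (hsAdj N) a]
  rw [frobSq_comb (z := fun s => ∑ r, (∏ k, ptm (hsAdj N) (s k) (r k)) * (a r : ℂ))]
  rw [show obsOf a = ∑ s, ((a s : ℝ) : ℂ) • pauliString s from rfl,
    frobSq_comb (z := fun s => ((a s : ℝ) : ℂ))]
  have hprod : (∏ k : Fin n, (if k ∈ A then Upsilon D t else 1)) = Upsilon D t ^ A.card := by
    rw [Finset.prod_ite_mem Finset.univ A (fun _ => Upsilon D t), Finset.univ_inter,
      Finset.prod_const]
  rw [← hprod]
  refine tensor_bound (ptm (hsAdj N)) _ ?_ (fun k b => if k ∈ A then b ≠ 0 else b = 0) ?_ _ ?_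
  · intro k
    by_cases hk : k ∈ A <;> simp [hk, upsilon_nonneg, zero_le_one]
  · intro k y hy
    by_cases hk : k ∈ A
    · rw [if_pos hk]
      refine site_bound hU hV hNform y ?_
      apply hy 0
      simp [hk]
    · rw [if_neg hk]
      refine site_bound_id hU hV hNform y fun b hb => ?_
      apply hy b
      simp [hk, hb]
  · intro s hs k
    have has : a s ≠ 0 := fun h => hs (by simp [h])
    have hpA : psupp s = A := by
      by_contra h
      exact has (ha s h)
    by_cases hk : k ∈ A
    · rw [if_pos hk]
      have hmem : k ∈ psupp s := hpA ▸ hk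
      simpa [psupp] using hmem
    · rw [if_neg hk]
      have hmem : k ∉ psupp s := by rw [hpA]; exact hk
      simpa [psupp, not_not] using hmem

end
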